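/- Suppose A ∈ ℝ^{m×n} admits x̂ with A x̂ < 0, and let H := sup over y with ‖y‖ ≤ 1 of the minimum of ‖x‖ over x with A x ≤ y. Then for every u ∈ ℝⁿ with A u ≰ 0, dist(u, P) ≤ H · ‖(A u)⁺‖, where P = {x : A x ≤ 0}; that is, H₀(A) ≤ H. -/

import Mathlib

/-- Proposition 1 (pointwise form): if `A xhat < 0` for some `xhat`, then for every
`u ∉ P = {x : A x ≤ 0}`, `dist(u,P) ≤ H ⬝ ‖(A u)⁺‖` where
`H = sup_{‖y‖ ≤ 1} inf_{A x ≤ y} ‖x‖`; i.e. `H₀(A) ≤ H`. Norms are given by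
seminorms `nn`, `nm` that are definite (hence norms), with `nm` componentwise
compatible. -/
theorem stmt3 {m n : ℕ} (A : Matrix (Fin m) (Fin n) ℝ)
    (nn : Seminorm ℝ (Fin n → ℝ)) (nm : Seminorm ℝ (Fin m → ℝ))
    (hnn : ∀ x, nn x = 0 → x = 0) (hnm : ∀ y, nm y = 0 → y = 0)
    (hcompat : ∀ y z : Fin m → ℝ, (∀ i, |y i| ≤ |z i|) → nm y ≤ nm z)
    (xhat : Fin n → ℝ) (hxhat : ∀ i, A.mulVec xhat i < 0) :
    ∀ u : Fin n → ℝ, (¬ ∀ i, A.mulVec u i ≤ 0) →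
      sInf {r | ∃ x, (∀ i, A.mulVec x i ≤ 0) ∧ r = nn (u - x)} ≤
        (sSup {r | ∃ y : Fin m → ℝ, nm y ≤ 1 ∧
            r = sInf {s | ∃ x, (∀ i, A.mulVec x i ≤ y i) ∧ s = nn x}}) *
          nm (fun i => max (A.mulVec u i) 0) := by
  classical
  intro u hu
  set v : Fin m → ℝ := fun i => max (A.mulVec u i) 0 with hv
  have hvne : v ≠ 0 := by
    intro h
    apply hu
    intro i
    have h1 : max (A.mulVec u i) 0 = 0 := congrFun h i
    have h2 := le_max_left (A.mulVec u i) 0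
    linarith
  have ht : 0 < nm v := (apply_nonneg nm v).lt_of_ne (fun h => hvne (hnm v h.symm))
  -- positivity of unit vector norms
  have hsingle : ∀ i, 0 < nm (Pi.single i (1:ℝ)) := by
    intro i
    refine (apply_nonneg nm _).lt_of_ne fun h => ?_
    have h1 := hnm _ h.symm
    have h2 := congrFun h1 i
    simp at h2
  -- coordinate bounds on the unit ball
  have hcoord : ∀ (y : Fin m → ℝ), nm y ≤ 1 → ∀ i, |y i| ≤ 1 / nm (Pi.single i (1:ℝ)) := by
    intro y hy i
    have h1 : nm (Pi.single i (y i)) ≤ nm y := by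
      apply hcompat
      intro j
      simp only [Pi.single_apply]
      split_ifs with hj
      · subst hj; exact le_rfl
      · simp [abs_nonneg]
    have h2 : Pi.single i (y i) = (y i) • (Pi.single i (1:ℝ) : Fin m → ℝ) := by
      funext j
      simp only [Pi.smul_apply, smul_eq_mul, Pi.single_apply]
      split_ifs <;> simp
    rw [h2, map_smul_eq_mul] at h1
    rw [le_div_iff₀ (hsingle i)]
    calc |y i| * nm (Pi.single i 1) ≤ nm y := by simpa using h1
    _ ≤ 1 := hy
  -- the scaling constant for the Slater point
  set s₀ : ℝ := ∑ i, (1 / nm (Pi.single i (1:ℝ))) / (-(A.mulVec xhat i)) with hs₀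
  have hterm : ∀ i, 0 ≤ (1 / nm (Pi.single i (1:ℝ))) / (-(A.mulVec xhat i)) := by
    intro i
    have h1 := hsingle i
    have h2 := hxhat i
    have h3 : 0 < -(A.mulVec xhat i) := by linarith
    positivity
  have hs₀i : ∀ i, (1 / nm (Pi.single i (1:ℝ))) / (-(A.mulVec xhat i)) ≤ s₀ :=
    fun i => Finset.single_le_sum (fun j _ => hterm j) (Finset.mem_univ i)
  have hwitness : ∀ (y : Fin m → ℝ), nm y ≤ 1 → ∀ i, A.mulVec (s₀ • xhat) i ≤ y i := by
    intro y hy i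
    have h1 : A.mulVec (s₀ • xhat) i = s₀ * A.mulVec xhat i := by
      rw [Matrix.mulVec_smul]; rfl
    have hci := hcoord y hy i
    have hax := hxhat i
    have h2 : s₀ * A.mulVec xhat i ≤ ((1 / nm (Pi.single i (1:ℝ))) / (-(A.mulVec xhat i))) * A.mulVec xhat i :=
      mul_le_mul_of_nonpos_right (hs₀i i) hax.le
    have h3 : ((1 / nm (Pi.single i (1:ℝ))) / (-(A.mulVec xhat i))) * A.mulVec xhat i
        = -(1 / nm (Pi.single i (1:ℝ))) := by
      rw [div_mul_eq_mul_div, div_eq_iff (by linarith : -(A.mulVec xhat i) ≠ 0)]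
      ring
    have h4 : -(1 / nm (Pi.single i (1:ℝ))) ≤ y i := by
      have h5 := abs_le.mp hci
      linarith [h5.1]
    rw [h1]; linarith
  -- the sup set is bounded above
  have hSbdd : BddAbove {r | ∃ y : Fin m → ℝ, nm y ≤ 1 ∧
      r = sInf {s | ∃ x, (∀ i, A.mulVec x i ≤ y i) ∧ s = nn x}} := by
    refine ⟨nn (s₀ • xhat), ?_⟩
    rintro r ⟨y, hy, rfl⟩
    refine csInf_le ⟨0, ?_⟩ ⟨s₀ • xhat, hwitness y hy, rfl⟩
    rintro s ⟨x, _, rfl⟩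
    exact apply_nonneg nn x
  -- our chosen y
  set y₀ : Fin m → ℝ := (-(nm v)⁻¹) • v with hy₀
  have hy₀1 : nm y₀ ≤ 1 := by
    rw [hy₀, map_smul_eq_mul, Real.norm_eq_abs, abs_neg, abs_inv, abs_of_pos ht,
      inv_mul_cancel₀ ht.ne']
  set r₀ : ℝ := sInf {s | ∃ x, (∀ i, A.mulVec x i ≤ y₀ i) ∧ s = nn x} with hr₀
  have hr₀S : r₀ ≤ sSup {r | ∃ y : Fin m → ℝ, nm y ≤ 1 ∧
      r = sInf {s | ∃ x, (∀ i, A.mulVec x i ≤ y i) ∧ s = nn x}} :=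
    le_csSup hSbdd ⟨y₀, hy₀1, rfl⟩
  have hne : Set.Nonempty {s | ∃ x, (∀ i, A.mulVec x i ≤ y₀ i) ∧ s = nn x} :=
    ⟨nn (s₀ • xhat), s₀ • xhat, hwitness y₀ hy₀1, rfl⟩
  -- main estimate
  have key : ∀ ε > 0, sInf {r | ∃ x, (∀ i, A.mulVec x i ≤ 0) ∧ r = nn (u - x)}
      ≤ nm v * r₀ + ε := by
    intro ε hε
    have hlt : r₀ < r₀ + ε / nm v := by
      have : 0 < ε / nm v := div_pos hε ht
      linarith
    obtain ⟨s, hs, hslt⟩ := exists_lt_of_csInf_lt hne hlt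
    obtain ⟨x, hx, rfl⟩ := hs
    have hp : ∀ i, A.mulVec (u + (nm v) • x) i ≤ 0 := by
      intro i
      have h1 : A.mulVec (u + nm v • x) i = A.mulVec u i + nm v * A.mulVec x i := by
        rw [Matrix.mulVec_add, Matrix.mulVec_smul]; rfl
      have h2 : nm v * A.mulVec x i ≤ nm v * y₀ i := mul_le_mul_of_nonneg_left (hx i) ht.le
      have h3 : nm v * y₀ i = - v i := by
        have he : y₀ i = -(nm v)⁻¹ * v i := rfl
        rw [he, neg_mul, mul_neg, neg_inj, ← mul_assoc, mul_inv_cancel₀ ht.ne', one_mul]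
      have h4 : A.mulVec u i ≤ v i := le_max_left _ _
      rw [h1]; rw [h3] at h2; linarith
    have hd : nn (u - (u + nm v • x)) = nm v * nn x := by
      have h1 : u - (u + nm v • x) = (-(nm v)) • x := by
        ext j
        simp [mul_comm]
      rw [h1, map_smul_eq_mul, Real.norm_eq_abs, abs_neg, abs_of_pos ht]
    calc sInf {r | ∃ x, (∀ i, A.mulVec x i ≤ 0) ∧ r = nn (u - x)}
        ≤ nn (u - (u + nm v • x)) := by
          refine csInf_le ⟨0, ?_⟩ ⟨u + nm v • x, hp, rfl⟩
          rintro s ⟨x', _, rfl⟩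
          exact apply_nonneg nn _
      _ = nm v * nn x := hd
      _ ≤ nm v * (r₀ + ε / nm v) := mul_le_mul_of_nonneg_left hslt.le ht.le
      _ = nm v * r₀ + ε := by field_simp
  have hfin : sInf {r | ∃ x, (∀ i, A.mulVec x i ≤ 0) ∧ r = nn (u - x)} ≤ nm v * r₀ :=
    le_of_forall_pos_le_add key
  rw [mul_comm]
  exact hfin.trans (mul_le_mul_of_nonneg_left hr₀S ht.le)
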